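/- Let F be a union-closed family whose poset under inclusion satisfies DCC, and let x ∈ U_F. If there exists A ∈ F not containing x with A ∪ {x} ∉ F, then there exists B ∈ F not containing x, minimal among members of F not containing x, such that B ∪ {x} ∉ F. -/
import Mathlib


/-- If `F` is union-closed with DCC and some `A ∈ F` with `x ∉ A` has
`A ∪ {x} ∉ F`, then some minimal member `B` of `F_x^c` has `B ∪ {x} ∉ F`. -/
theorem stmt_5 {α : Type*} (F : Set (Set α))
    (hUC : ∀ A ∈ F, ∀ B ∈ F, A ∪ B ∈ F)
    (hDCC : ∀ S ⊆ F, S.Nonempty → ∃ M ∈ S, ∀ B ∈ S, B ⊆ M → B = M)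
    (x : α) (hx : x ∈ ⋃₀ F)
    (hA : ∃ A ∈ F, x ∉ A ∧ A ∪ {x} ∉ F) :
    ∃ B ∈ F, x ∉ B ∧
      (∀ C ∈ F, x ∉ C → C ⊆ B → C = B) ∧
      B ∪ {x} ∉ F := by
  obtain ⟨A, hAF, hxA, hAx⟩ := hA
  set S : Set (Set α) := {A | A ∈ F ∧ x ∉ A ∧ A ∪ {x} ∉ F} with hS
  obtain ⟨M, hMS, hMmin⟩ := hDCC S (fun A hA => hA.1) ⟨A, hAF, hxA, hAx⟩
  obtain ⟨hMF, hxM, hMx⟩ := hMS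
  refine ⟨M, hMF, hxM, ?_, hMx⟩
  intro C hCF hxC hCM
  by_cases hCx : C ∪ {x} ∈ F
  · exfalso
    have := hUC M hMF (C ∪ {x}) hCx
    have heq : M ∪ (C ∪ {x}) = M ∪ {x} := by
      rw [← Set.union_assoc, Set.union_eq_self_of_subset_right hCM]
    rw [heq] at this
    exact hMx this
  · exact hMmin C ⟨hCF, hxC, hCx⟩ hCM
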